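/- Let $n \geq 1$, $\lambda = 0$, and let $K$ be a kernel on $\mathbb{R}^n \times \mathbb{R}^n$ satisfying $|K(x,y)| \leq C |x - y|^{-n}$. Let $\sigma, \omega$ be locally finite measures and $Q$ a cube. Then the tail of the testing integral satisfies $\frac{1}{|Q|_{\sigma}} \int_{(3Q)^c} \left( \int_Q |K(x,y)| \, d\sigma(y) \right)^p d\omega(x) \lesssim \mathcal{A}_p(\sigma, \omega)^p$ for every $1 < p < \infty$. -/

import Mathlib

open MeasureTheory Set ENNReal

/-- The axis-parallel half-open cube with corner `a` and sidelength `l`. -/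
def cubeSet {n : ℕ} (a : Fin n → ℝ) (l : ℝ) : Set (Fin n → ℝ) :=
  {x | ∀ i, x i ∈ Set.Ico (a i) (a i + l)}

/-- The concentric triple `3Q` of the cube with corner `a` and sidelength `l`. -/
def tripleCube {n : ℕ} (a : Fin n → ℝ) (l : ℝ) : Set (Fin n → ℝ) :=
  cubeSet (fun i => a i - l) (3 * l)

/-- The two-tailed Muckenhoupt characteristic `𝒜_p(σ,ω)`. -/
noncomputable def tailedAp (n : ℕ) (p p' : ℝ) (σ ω : Measure (Fin n → ℝ)) : ℝ≥0∞ :=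
  ⨆ (a : Fin n → ℝ) (l : ℝ) (_ : 0 < l),
    ((ENNReal.ofReal (l ^ n))⁻¹ *
      ∫⁻ x, ENNReal.ofReal ((l ^ n / (l + Metric.infDist x (cubeSet a l)) ^ n) ^ p) ∂ω) ^ (1 / p) *
    ((ENNReal.ofReal (l ^ n))⁻¹ *
      ∫⁻ x, ENNReal.ofReal ((l ^ n / (l + Metric.infDist x (cubeSet a l)) ^ n) ^ p') ∂σ) ^ (1 / p')


lemma cubeSet_eq_pi {n : ℕ} (a : Fin n → ℝ) (l : ℝ) :
    cubeSet a l = Set.pi Set.univ (fun i => Set.Ico (a i) (a i + l)) := by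
  ext x; simp [cubeSet, Set.mem_pi]

lemma cubeSet_measurable {n : ℕ} (a : Fin n → ℝ) (l : ℝ) :
    MeasurableSet (cubeSet a l) := by
  rw [cubeSet_eq_pi]; exact MeasurableSet.univ_pi fun i => measurableSet_Ico

/-- The tail of the testing integral over `(3Q)ᶜ` is controlled by `𝒜_p(σ,ω)^p`,
for kernels with Calderón–Zygmund size bound `|K(x,y)| ≤ C_K |x-y|^{-n}`. -/
theorem stmt13 (n : ℕ) (hn : 1 ≤ n) (p p' : ℝ) (hp : 1 < p) (hpp' : 1 / p + 1 / p' = 1)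
    (CK : ℝ) (hCK : 0 ≤ CK) :
    ∃ C : ℝ≥0∞, 0 < C ∧ C < ∞ ∧
      ∀ (K : (Fin n → ℝ) → (Fin n → ℝ) → ℝ),
        (∀ x y, x ≠ y → |K x y| ≤ CK / dist x y ^ n) →
        ∀ (σ ω : Measure (Fin n → ℝ)) [IsLocallyFiniteMeasure σ] [IsLocallyFiniteMeasure ω],
          ∀ (a : Fin n → ℝ) (l : ℝ), 0 < l →
            (∫⁻ x in (tripleCube a l)ᶜ,
                (∫⁻ y in cubeSet a l, ENNReal.ofReal |K x y| ∂σ) ^ p ∂ω) / σ (cubeSet a l)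
              ≤ C * tailedAp n p p' σ ω ^ p := by
  have hp0 : (0:ℝ) < p := lt_trans one_pos hp
  have hp0' : p ≠ 0 := ne_of_gt hp0
  have hpm1 : (0:ℝ) ≤ p - 1 := by linarith
  have hppm : (1/p') * p = p - 1 := by
    have h1 : 1/p' = 1 - 1/p := by linarith
    rw [h1]; field_simp
  have hppo : (1/p) * p = 1 := by field_simp
  refine ⟨ENNReal.ofReal ((2^n * CK)^p) + 1, ?_, ?_, ?_⟩
  · exact lt_of_lt_of_le zero_lt_one le_add_self
  · exact ENNReal.add_lt_top.mpr ⟨ENNReal.ofReal_lt_top, ENNReal.one_lt_top⟩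
  intro K hK σ ω _ _ a l hl
  have hln : (0:ℝ) < l ^ n := pow_pos hl n
  have hQmeas : MeasurableSet (cubeSet a l) := cubeSet_measurable a l
  set Q := cubeSet a l with hQdef
  by_cases hQ0 : σ Q = 0
  · have h0 : ∀ x, (∫⁻ y in Q, ENNReal.ofReal |K x y| ∂σ) ^ p = 0 := by
      intro x
      rw [setLIntegral_measure_zero _ _ hQ0, ENNReal.zero_rpow_of_pos hp0]
    simp only [h0, lintegral_zero, ENNReal.zero_div]
    exact zero_le
  have hQfin : σ Q ≠ ∞ := by
    have hsub : Q ⊆ Set.pi Set.univ (fun i => Set.Icc (a i) (a i + l)) := by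
      rw [hQdef, cubeSet_eq_pi]
      exact Set.pi_mono fun i _ => Set.Ico_subset_Icc_self
    exact ((measure_mono hsub).trans_lt
      (isCompact_univ_pi fun i => isCompact_Icc).measure_lt_top).ne
  have htmeas : MeasurableSet ((tripleCube a l)ᶜ) := (cubeSet_measurable _ _).compl
  -- geometry
  have hDnn : ∀ x, (0:ℝ) ≤ Metric.infDist x Q := fun x => Metric.infDist_nonneg
  have hgeo : ∀ x ∈ (tripleCube a l)ᶜ, ∀ y ∈ Q,
      l + Metric.infDist x Q ≤ 2 * dist x y := by
    intro x hx y hy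
    have hdy : Metric.infDist x Q ≤ dist x y := Metric.infDist_le_dist_of_mem hy
    have hxy : l ≤ dist x y := by
      simp only [tripleCube, cubeSet, Set.mem_compl_iff, Set.mem_setOf_eq,
        Set.mem_Ico, not_forall] at hx
      obtain ⟨i, hi⟩ := hx
      have hyi : a i ≤ y i ∧ y i < a i + l := by
        have := hy i; simpa [Set.mem_Ico] using this
      have hcoord : l ≤ |x i - y i| := by
        rcases not_and_or.mp hi with h | h
        · push_neg at h
          rw [abs_sub_comm, le_abs]
          left; linarith [hyi.1]
        · push_neg at h
          rw [le_abs]; left; linarith [hyi.2]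
      calc l ≤ |x i - y i| := hcoord
        _ = dist (x i) (y i) := (Real.dist_eq _ _).symm
        _ ≤ dist x y := dist_le_pi_dist x y i
    linarith
  -- kernel bound
  have hker : ∀ x ∈ (tripleCube a l)ᶜ, ∀ y ∈ Q,
      ENNReal.ofReal |K x y| ≤
        ENNReal.ofReal (2^n * CK / (l + Metric.infDist x Q)^n) := by
    intro x hx y hy
    have hg := hgeo x hx y hy
    have hD0 := hDnn x
    have hdxy : 0 < dist x y := by linarith
    have hne : x ≠ y := by
      intro h; rw [h, dist_self] at hdxy; exact lt_irrefl _ hdxy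
    apply ENNReal.ofReal_le_ofReal
    calc |K x y| ≤ CK / dist x y ^ n := hK x y hne
      _ ≤ CK / ((l + Metric.infDist x Q)/2) ^ n := by
          apply div_le_div_of_nonneg_left hCK (by positivity)
          exact pow_le_pow_left₀ (by positivity) (by linarith) n
      _ = 2^n * CK / (l + Metric.infDist x Q)^n := by
          rw [div_pow, div_div_eq_mul_div]; ring
  -- inner integral bound
  have hinner : ∀ x ∈ (tripleCube a l)ᶜ,
      (∫⁻ y in Q, ENNReal.ofReal |K x y| ∂σ)
        ≤ ENNReal.ofReal (2^n * CK / (l + Metric.infDist x Q)^n) * σ Q := by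
    intro x hx
    calc ∫⁻ y in Q, ENNReal.ofReal |K x y| ∂σ
        ≤ ∫⁻ _ in Q, ENNReal.ofReal (2^n * CK / (l + Metric.infDist x Q)^n) ∂σ := by
          apply lintegral_mono_ae
          filter_upwards [ae_restrict_mem hQmeas] with y hy
          exact hker x hx y hy
      _ = _ := setLIntegral_const _ _
  -- pointwise algebra
  have hptwise : ∀ x, (ENNReal.ofReal (2^n * CK / (l + Metric.infDist x Q)^n) * σ Q) ^ p
      = ENNReal.ofReal ((2^n * CK / l^n)^p) *
        ENNReal.ofReal ((l^n / (l + Metric.infDist x Q)^n)^p) * σ Q ^ p := by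
    intro x
    have hD0 := hDnn x
    have hld : (0:ℝ) < (l + Metric.infDist x Q)^n := pow_pos (by linarith) n
    rw [ENNReal.mul_rpow_of_nonneg _ _ hp0.le]
    congr 1
    have hAB : (2^n * CK / l^n) * (l^n / (l + Metric.infDist x Q)^n)
        = 2^n * CK / (l + Metric.infDist x Q)^n := by
      field_simp
    rw [← ENNReal.ofReal_mul (by positivity),
        ← Real.mul_rpow (by positivity) (by positivity), hAB]
    exact ENNReal.ofReal_rpow_of_nonneg (by positivity) hp0.le
  set Iω := ∫⁻ x, ENNReal.ofReal ((l ^ n / (l + Metric.infDist x Q) ^ n) ^ p) ∂ω with hIω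
  set Iσ := ∫⁻ x, ENNReal.ofReal ((l ^ n / (l + Metric.infDist x Q) ^ n) ^ p') ∂σ with hIσ
  have hσQp : σ Q ^ p ≠ ∞ := ENNReal.rpow_ne_top_of_nonneg hp0.le hQfin
  have hNum : (∫⁻ x in (tripleCube a l)ᶜ,
      (∫⁻ y in Q, ENNReal.ofReal |K x y| ∂σ) ^ p ∂ω)
      ≤ σ Q ^ p * (ENNReal.ofReal ((2^n * CK / l^n)^p) * Iω) := by
    calc (∫⁻ x in (tripleCube a l)ᶜ,
        (∫⁻ y in Q, ENNReal.ofReal |K x y| ∂σ) ^ p ∂ω)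
        ≤ ∫⁻ x in (tripleCube a l)ᶜ,
            (ENNReal.ofReal (2^n * CK / (l + Metric.infDist x Q)^n) * σ Q) ^ p ∂ω := by
          apply lintegral_mono_ae
          filter_upwards [ae_restrict_mem htmeas] with x hx
          exact ENNReal.rpow_le_rpow (hinner x hx) hp0.le
      _ ≤ ∫⁻ x, (ENNReal.ofReal (2^n * CK / (l + Metric.infDist x Q)^n) * σ Q) ^ p ∂ω :=
          setLIntegral_le_lintegral _ _
      _ = ∫⁻ x, ENNReal.ofReal ((2^n * CK / l^n)^p) *
            ENNReal.ofReal ((l^n / (l + Metric.infDist x Q)^n)^p) * σ Q ^ p ∂ω := by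
          simp only [hptwise]
      _ = σ Q ^ p * (ENNReal.ofReal ((2^n * CK / l^n)^p) * Iω) := by
          rw [lintegral_mul_const' _ _ hσQp,
              lintegral_const_mul' _ _ ENNReal.ofReal_ne_top, hIω]
          ring
  have hIσQ : σ Q ≤ Iσ := by
    have h1 : σ Q = ∫⁻ _ in Q, 1 ∂σ := (setLIntegral_one Q).symm
    rw [h1, hIσ]
    calc (∫⁻ _ in Q, 1 ∂σ)
        ≤ ∫⁻ x in Q, ENNReal.ofReal ((l^n / (l + Metric.infDist x Q)^n)^p') ∂σ := by
          apply lintegral_mono_ae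
          filter_upwards [ae_restrict_mem hQmeas] with x hx
          rw [Metric.infDist_zero_of_mem hx, add_zero, div_self (ne_of_gt hln),
            Real.one_rpow, ENNReal.ofReal_one]
      _ ≤ _ := setLIntegral_le_lintegral _ _
  set L := ENNReal.ofReal (l ^ n) with hL
  have hL0 : L ≠ 0 := (ENNReal.ofReal_pos.mpr hln).ne'
  have hLt : L ≠ ∞ := ENNReal.ofReal_ne_top
  have hT : (L⁻¹ * Iω) ^ (1/p) * (L⁻¹ * Iσ) ^ (1/p') ≤ tailedAp n p p' σ ω := by
    unfold tailedAp
    apply le_iSup_of_le a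
    apply le_iSup_of_le l
    apply le_iSup_of_le hl
    rw [hIω, hIσ, hL, hQdef]
  have hTp : L⁻¹ * Iω * (L⁻¹ * σ Q) ^ (p-1) ≤ (tailedAp n p p' σ ω) ^ p := by
    calc L⁻¹ * Iω * (L⁻¹ * σ Q) ^ (p-1)
        ≤ L⁻¹ * Iω * (L⁻¹ * Iσ) ^ (p-1) := by gcongr
      _ = ((L⁻¹ * Iω) ^ (1/p) * (L⁻¹ * Iσ) ^ (1/p')) ^ p := by
          rw [ENNReal.mul_rpow_of_nonneg _ _ hp0.le, ← ENNReal.rpow_mul, ← ENNReal.rpow_mul,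
            hppo, hppm, ENNReal.rpow_one]
      _ ≤ _ := ENNReal.rpow_le_rpow hT hp0.le
  have hc0 : ENNReal.ofReal ((2^n * CK / l^n)^p)
      = ENNReal.ofReal ((2^n * CK)^p) * (L^p)⁻¹ := by
    rw [Real.div_rpow (by positivity) hln.le, ENNReal.ofReal_div_of_pos (by positivity),
      div_eq_mul_inv, hL, ENNReal.ofReal_rpow_of_pos hln]
  have hLinv : (L⁻¹) * (L⁻¹)^(p-1) = (L^p)⁻¹ := by
    have h1 : (L⁻¹)^(p:ℝ) = (L⁻¹)^(1 + (p-1)) := by norm_num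
    rw [← ENNReal.inv_rpow, h1,
      ENNReal.rpow_add _ _ (ENNReal.inv_ne_zero.mpr hLt) (ENNReal.inv_ne_top.mpr hL0),
      ENNReal.rpow_one]
  calc (∫⁻ x in (tripleCube a l)ᶜ,
        (∫⁻ y in Q, ENNReal.ofReal |K x y| ∂σ) ^ p ∂ω) / σ Q
      ≤ σ Q ^ p * (ENNReal.ofReal ((2^n * CK / l^n)^p) * Iω) / σ Q :=
        ENNReal.div_le_div_right hNum _
    _ = ENNReal.ofReal ((2^n * CK)^p) * (L⁻¹ * Iω * (L⁻¹ * σ Q) ^ (p-1)) := by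
        have hQsplit : σ Q ^ p = σ Q ^ (p-1) * σ Q := by
          have h := ENNReal.rpow_add (x := σ Q) (p-1) 1 hQ0 hQfin
          rw [ENNReal.rpow_one, show p - 1 + 1 = p by ring] at h
          exact h
        rw [hQsplit, hc0, ENNReal.mul_rpow_of_nonneg _ _ hpm1, ← hLinv,
          mul_right_comm, mul_div_assoc, ENNReal.div_self hQ0 hQfin, mul_one]
        ring
    _ ≤ (ENNReal.ofReal ((2^n * CK)^p) + 1) * tailedAp n p p' σ ω ^ p :=
        mul_le_mul' le_self_add hTp
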